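/- Define J(t) = (3/(2π)) · ∫_{−2√2}^{2√2} e^{s·t} · √(8 − s²)/(9 − s²) ds, define I_m(x) = ∑_{r=0}^∞ (x/2)^{m+2r}/(r!·(m+r)!) for integers m ≥ 0, and define F_ℓ(t) = ∑_{k=1}^∞ 2^{−kℓ/2}·I_{kℓ}(2√2·t) for integers ℓ ≥ 3. Then for every integer ℓ ≥ 3, F_ℓ(2/3) − 2·J(1/3)·F_ℓ(1/3) > 0. -/

import Mathlib

/-- The main term `J(t)` of the Ihara-Selberg trace formula for cubic graphs:
`J(t) = (3/(2π)) ∫_{-2√2}^{2√2} e^{st} √(8 - s²)/(9 - s²) ds`. -/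
noncomputable def iharaSelbergMainTerm (t : ℝ) : ℝ :=
  (3 / (2 * Real.pi)) *
    ∫ s in (-(2 * Real.sqrt 2))..(2 * Real.sqrt 2),
      Real.exp (s * t) * Real.sqrt (8 - s ^ 2) / (9 - s ^ 2)

/-- The modified Bessel function of the first kind of nonnegative integer order:
`I_m(x) = ∑_{r=0}^∞ (x/2)^{m+2r}/(r!·(m+r)!)`. -/
noncomputable def besselI (m : ℕ) (x : ℝ) : ℝ :=
  ∑' r : ℕ, (x / 2) ^ (m + 2 * r) /
    ((Nat.factorial r : ℝ) * (Nat.factorial (m + r) : ℝ))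

/-- The geodesic term `F_ℓ(t) = ∑_{k=1}^∞ 2^{-kℓ/2}·I_{kℓ}(2√2·t)` of the explicit
Ihara-Selberg trace formula for cubic graphs (note `2^{kℓ/2} = (√2)^{kℓ}`). -/
noncomputable def geodesicTerm (ℓ : ℕ) (t : ℝ) : ℝ :=
  ∑' k : ℕ, (Real.sqrt 2 ^ ((k + 1) * ℓ))⁻¹ *
    besselI ((k + 1) * ℓ) (2 * Real.sqrt 2 * t)

lemma summable_besselI_terms (m : ℕ) (x : ℝ) (hx : 0 ≤ x) :
    Summable (fun r : ℕ => (x / 2) ^ (m + 2 * r) /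
      ((Nat.factorial r : ℝ) * (Nat.factorial (m + r) : ℝ))) := by
  have h := (Real.summable_pow_div_factorial ((x / 2) ^ 2)).mul_left ((x / 2) ^ m)
  refine Summable.of_nonneg_of_le (fun r => by positivity) (fun r => ?_) h
  have h1 : (x / 2) ^ (m + 2 * r) = (x / 2) ^ m * ((x / 2) ^ 2) ^ r := by
    rw [← pow_mul, ← pow_add]
  rw [h1, mul_div_assoc]
  have hf1 : (0:ℝ) < (Nat.factorial r : ℝ) := by exact_mod_cast Nat.factorial_pos r
  have hf2 : (1:ℝ) ≤ (Nat.factorial (m + r) : ℝ) := by exact_mod_cast Nat.one_le_iff_ne_zero.mpr (Nat.factorial_pos (m+r)).ne'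
  gcongr
  nlinarith

lemma besselI_nonneg (m : ℕ) (x : ℝ) (hx : 0 ≤ x) : 0 ≤ besselI m x :=
  tsum_nonneg fun r => by positivity

lemma besselI_pos (m : ℕ) (x : ℝ) (hx : 0 < x) : 0 < besselI m x := by
  refine Summable.tsum_pos (summable_besselI_terms m x hx.le) (fun r => by positivity) 0 ?_
  positivity

lemma besselI_double (m : ℕ) (hm : 3 ≤ m) (x : ℝ) (hx : 0 ≤ x) :
    8 * besselI m x ≤ besselI m (2 * x) := by
  unfold besselI
  rw [← tsum_mul_left]
  refine Summable.tsum_le_tsum (fun r => ?_)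
    ((summable_besselI_terms m x hx).mul_left 8)
    (summable_besselI_terms m (2 * x) (by positivity))
  have harg : (2 * x / 2) = x := by ring
  rw [harg, ← mul_div_assoc]
  have hn : 3 ≤ m + 2 * r := le_trans hm (Nat.le_add_right _ _)
  have key : (8:ℝ) * (x / 2) ^ (m + 2 * r) ≤ x ^ (m + 2 * r) := by
    have hx2 : x ^ (m + 2 * r) = 2 ^ (m + 2 * r) * (x / 2) ^ (m + 2 * r) := by
      rw [← mul_pow]; ring_nf
    rw [hx2]
    refine mul_le_mul_of_nonneg_right ?_ (by positivity)
    calc (8:ℝ) = 2 ^ 3 := by norm_num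
    _ ≤ 2 ^ (m + 2 * r) := pow_le_pow_right₀ (by norm_num) hn
  gcongr

/-- constant `E = ∑ 1/r!` used as a uniform bound. -/
noncomputable def Ebnd : ℝ := ∑' r : ℕ, (1:ℝ) / (Nat.factorial r : ℝ)

lemma summable_Ebnd : Summable (fun r : ℕ => (1:ℝ) / (Nat.factorial r : ℝ)) := by
  simpa using Real.summable_pow_div_factorial 1

lemma besselI_le_Ebnd (m : ℕ) (x : ℝ) (hx0 : 0 ≤ x) (hx : x ≤ 2) :
    besselI m x ≤ Ebnd := by
  refine Summable.tsum_le_tsum (fun r => ?_) (summable_besselI_terms m x hx0) summable_Ebnd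
  have hf1 : (0:ℝ) < (Nat.factorial r : ℝ) := by exact_mod_cast Nat.factorial_pos r
  have hf2 : (1:ℝ) ≤ (Nat.factorial (m + r) : ℝ) := by
    exact_mod_cast Nat.one_le_iff_ne_zero.mpr (Nat.factorial_pos (m + r)).ne'
  have hp : (x / 2) ^ (m + 2 * r) ≤ 1 := pow_le_one₀ (by linarith) (by linarith)
  calc (x / 2) ^ (m + 2 * r) / ((Nat.factorial r : ℝ) * (Nat.factorial (m + r) : ℝ))
      ≤ 1 / ((Nat.factorial r : ℝ) * (Nat.factorial (m + r) : ℝ)) := by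
        gcongr
  _ ≤ 1 / ((Nat.factorial r : ℝ) * 1) := by gcongr
  _ = 1 / (Nat.factorial r : ℝ) := by rw [mul_one]

lemma sqrt2_gt_one : (1:ℝ) < Real.sqrt 2 := by
  have := Real.sq_sqrt (show (0:ℝ) ≤ 2 by norm_num)
  nlinarith [Real.sqrt_nonneg 2]

lemma summable_geodesic_terms (ℓ : ℕ) (hℓ : 3 ≤ ℓ) (x : ℝ) (hx0 : 0 ≤ x) (hx : x ≤ 2) :
    Summable (fun k : ℕ => (Real.sqrt 2 ^ ((k + 1) * ℓ))⁻¹ * besselI ((k + 1) * ℓ) x) := by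
  set q : ℝ := ((Real.sqrt 2) ^ ℓ)⁻¹ with hq
  have hs1 := sqrt2_gt_one
  have hℓ0 : ℓ ≠ 0 := by omega
  have hp1 : (1:ℝ) < Real.sqrt 2 ^ ℓ := one_lt_pow₀ hs1 hℓ0
  have hq0 : 0 ≤ q := by positivity
  have hq1 : q < 1 := by
    rw [hq, inv_lt_one_iff₀]; right; exact hp1
  have hE0 : 0 ≤ Ebnd := tsum_nonneg fun r => by positivity
  refine Summable.of_nonneg_of_le (fun k => ?_) (fun k => ?_)
    (((summable_geometric_of_lt_one hq0 hq1).mul_left (Ebnd * q)))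
  · have := besselI_nonneg ((k + 1) * ℓ) x hx0
    positivity
  · have hpow : Real.sqrt 2 ^ ((k + 1) * ℓ) = (Real.sqrt 2 ^ ℓ) ^ (k + 1) := by
      rw [← pow_mul, mul_comm]
    have hb := besselI_le_Ebnd ((k + 1) * ℓ) x hx0 hx
    have hinv : (Real.sqrt 2 ^ ((k + 1) * ℓ))⁻¹ = q ^ (k + 1) := by
      rw [hpow, hq, inv_pow]
    rw [hinv]
    calc q ^ (k + 1) * besselI ((k + 1) * ℓ) x ≤ q ^ (k + 1) * Ebnd := by
          refine mul_le_mul_of_nonneg_left hb (by positivity)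
    _ = Ebnd * q * q ^ k := by ring

lemma sqrt2_lt : Real.sqrt 2 < 1.4142136 := by
  rw [show (1.4142136:ℝ) = Real.sqrt (1.4142136 ^ 2) from
    (Real.sqrt_sq (by norm_num)).symm]
  exact Real.sqrt_lt_sqrt (by norm_num) (by norm_num)

lemma arg13_nonneg : (0:ℝ) ≤ 2 * Real.sqrt 2 * (1/3) := by positivity

lemma arg13_le : 2 * Real.sqrt 2 * (1/3) ≤ 2 := by nlinarith [sqrt2_lt, Real.sqrt_nonneg 2]

lemma arg23_le : 2 * Real.sqrt 2 * (2/3) ≤ 2 := by nlinarith [sqrt2_lt, Real.sqrt_nonneg 2]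

lemma geodesic_pos (ℓ : ℕ) (hℓ : 3 ≤ ℓ) : 0 < geodesicTerm ℓ (1/3) := by
  unfold geodesicTerm
  refine Summable.tsum_pos (summable_geodesic_terms ℓ hℓ _ arg13_nonneg arg13_le)
    (fun k => ?_) 0 ?_
  · have := besselI_nonneg ((k + 1) * ℓ) _ arg13_nonneg
    positivity
  · have hb : 0 < besselI ((0 + 1) * ℓ) (2 * Real.sqrt 2 * (1/3)) := by
      refine besselI_pos _ _ ?_
      have := sqrt2_gt_one; nlinarith
    positivity

lemma geodesic_comp (ℓ : ℕ) (hℓ : 3 ≤ ℓ) :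
    8 * geodesicTerm ℓ (1/3) ≤ geodesicTerm ℓ (2/3) := by
  unfold geodesicTerm
  rw [← tsum_mul_left]
  refine Summable.tsum_le_tsum (fun k => ?_)
    ((summable_geodesic_terms ℓ hℓ _ arg13_nonneg arg13_le).mul_left 8)
    (summable_geodesic_terms ℓ hℓ _ (by positivity) arg23_le)
  have hm : 3 ≤ (k + 1) * ℓ := le_trans hℓ (Nat.le_mul_of_pos_left ℓ k.succ_pos)
  have hd := besselI_double ((k + 1) * ℓ) hm _ arg13_nonneg
  rw [show (2:ℝ) * (2 * Real.sqrt 2 * (1/3)) = 2 * Real.sqrt 2 * (2/3) by ring] at hd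
  calc 8 * ((Real.sqrt 2 ^ ((k + 1) * ℓ))⁻¹ * besselI ((k + 1) * ℓ) (2 * Real.sqrt 2 * (1/3)))
      = (Real.sqrt 2 ^ ((k + 1) * ℓ))⁻¹ * (8 * besselI ((k + 1) * ℓ) (2 * Real.sqrt 2 * (1/3))) := by
        ring
  _ ≤ (Real.sqrt 2 ^ ((k + 1) * ℓ))⁻¹ * besselI ((k + 1) * ℓ) (2 * Real.sqrt 2 * (2/3)) := by
        refine mul_le_mul_of_nonneg_left hd (by positivity)

lemma mainTerm_lt : iharaSelbergMainTerm (1/3) < 4 := by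
  unfold iharaSelbergMainTerm
  have hsq2 : Real.sqrt 2 ^ 2 = 2 := Real.sq_sqrt (by norm_num)
  have hs0 : 0 < Real.sqrt 2 := by nlinarith [sqrt2_gt_one]
  set c : ℝ := 2 * Real.sqrt 2 with hc
  have hc2 : c ^ 2 = 8 := by rw [hc]; nlinarith
  have hcpos : 0 < c := by positivity
  have hc3 : c ≤ 3 := by nlinarith [sqrt2_lt]
  have hbound : ∀ s ∈ Set.uIoc (-c) c,
      ‖Real.exp (s * (1/3)) * Real.sqrt (8 - s ^ 2) / (9 - s ^ 2)‖ ≤ Real.exp 1 / 2 := by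
    intro s hs
    rw [Set.uIoc_of_le (by linarith : -c ≤ c)] at hs
    have hs1 : -c < s := hs.1
    have hs2 : s ≤ c := hs.2
    have hs8 : s ^ 2 ≤ 8 := by nlinarith
    have hden : (1:ℝ) ≤ 9 - s ^ 2 := by linarith
    have hnum : Real.sqrt (8 - s ^ 2) ≤ (9 - s ^ 2) / 2 := by
      nlinarith [Real.sq_sqrt (show (0:ℝ) ≤ 8 - s ^ 2 by linarith),
        Real.sqrt_nonneg (8 - s ^ 2), sq_nonneg (Real.sqrt (8 - s ^ 2) - 1)]
    have hexp : Real.exp (s * (1/3)) ≤ Real.exp 1 := by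
      refine Real.exp_le_exp.mpr ?_; linarith
    rw [Real.norm_eq_abs, abs_div, abs_mul, abs_of_pos (Real.exp_pos _),
      abs_of_nonneg (Real.sqrt_nonneg _), abs_of_pos (by linarith : (0:ℝ) < 9 - s ^ 2)]
    rw [div_le_div_iff₀ (by linarith) (by norm_num : (0:ℝ) < 2)]
    nlinarith [Real.sqrt_nonneg (8 - s ^ 2), Real.exp_pos (s * (1/3)),
      mul_le_mul_of_nonneg_left hnum (Real.exp_pos (s * (1/3))).le,
      mul_le_mul_of_nonneg_right hexp (Real.sqrt_nonneg (8 - s ^ 2))]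
  have hint := intervalIntegral.norm_integral_le_of_norm_le_const hbound
  have habs : |c - (-c)| = 2 * c := by rw [abs_of_pos (by linarith)]; ring
  rw [habs] at hint
  have hIle : (∫ s in (-c)..c, Real.exp (s * (1/3)) * Real.sqrt (8 - s ^ 2) / (9 - s ^ 2))
      ≤ Real.exp 1 * c := by
    have h1 := le_trans (le_abs_self _) hint
    calc (∫ s in (-c)..c, Real.exp (s * (1/3)) * Real.sqrt (8 - s ^ 2) / (9 - s ^ 2))
        ≤ Real.exp 1 / 2 * (2 * c) := h1
    _ = Real.exp 1 * c := by ring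
  have hπ : 0 < Real.pi := Real.pi_pos
  have hfrac : (0:ℝ) < 3 / (2 * Real.pi) := by positivity
  calc 3 / (2 * Real.pi) *
        (∫ s in (-c)..c, Real.exp (s * (1/3)) * Real.sqrt (8 - s ^ 2) / (9 - s ^ 2))
      ≤ 3 / (2 * Real.pi) * (Real.exp 1 * c) := by
        exact mul_le_mul_of_nonneg_left hIle hfrac.le
  _ < 4 := by
      rw [div_mul_eq_mul_div, div_lt_iff₀ (by positivity)]
      have he := Real.exp_one_lt_d9
      have hπ2 := Real.pi_gt_d6
      have hE0 := Real.exp_pos 1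
      nlinarith [sqrt2_lt, Real.sqrt_nonneg 2]

/-- For every integer `ℓ ≥ 3`,
`F_ℓ(2/3) - 2·J(1/3)·F_ℓ(1/3) > 0`. -/
theorem geodesicTerm_variance_combination_pos (ℓ : ℕ) (hℓ : 3 ≤ ℓ) :
    0 < geodesicTerm ℓ (2 / 3) -
      2 * iharaSelbergMainTerm (1 / 3) * geodesicTerm ℓ (1 / 3) := by
  have hB := geodesic_pos ℓ hℓ
  have hC := geodesic_comp ℓ hℓ
  have hJ := mainTerm_lt
  nlinarith [mul_pos (sub_pos.mpr hJ) hB]
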